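/- Let U ⊆ ℂ be open, let φ, ς : ℂ → ℂ be complex differentiable (holomorphic) on U, and set ψ := ς′. Define W(x, y) := Re((x − iy)·φ(x + iy) + ς(x + iy)) and the stresses σ_{xx} := ∂²W/∂y², σ_{xy} := −∂²W/∂x∂y, σ_{yy} := ∂²W/∂x². Then for every z = x + iy ∈ U, the second Kolosov–Muskhelishvili formula holds: σ_{yy} − σ_{xx} + 2i σ_{xy} = 2(z̄ φ″(z) + ψ′(z)). -/

import Mathlib

open Complex


lemma auxY (g : ℂ → ℂ) (x y : ℝ) (hg : DifferentiableAt ℂ g ((x:ℂ) + y*I)) :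
    HasDerivAt (fun y' : ℝ => g ((x:ℂ) + y'*I)) (deriv g ((x:ℂ)+y*I) * I) y := by
  have h1 : HasDerivAt (fun y' : ℝ => (x:ℂ) + y'*I) I y := by
    simpa using ((Complex.ofRealCLM.hasDerivAt (x := y)).mul_const I).const_add (x:ℂ)
  have h2 := (hg.hasDerivAt.hasFDerivAt.restrictScalars ℝ).comp_hasDerivAt y h1
  simp [mul_comm] at h2 ⊢
  exact h2

lemma auxX (g : ℂ → ℂ) (x y : ℝ) (hg : DifferentiableAt ℂ g ((x:ℂ) + y*I)) :
    HasDerivAt (fun x' : ℝ => g ((x':ℂ) + y*I)) (deriv g ((x:ℂ)+y*I)) x := by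
  have h1 : HasDerivAt (fun x' : ℝ => (x':ℂ) + y*I) 1 x := by
    simpa using (Complex.ofRealCLM.hasDerivAt (x := x)).add_const ((y:ℂ)*I)
  have h2 := (hg.hasDerivAt.hasFDerivAt.restrictScalars ℝ).comp_hasDerivAt x h1
  simp at h2 ⊢
  exact h2

lemma auxRe {g : ℝ → ℂ} {g' : ℂ} {t : ℝ} (h : HasDerivAt g g' t) :
    HasDerivAt (fun s => (g s).re) g'.re t := by
  have h2 := Complex.reCLM.hasFDerivAt.comp_hasDerivAt t h
  simp at h2 ⊢
  exact h2

lemma WyD (φ ς : ℂ → ℂ) (x y : ℝ)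
    (hφ : DifferentiableAt ℂ φ ((x:ℂ)+y*I)) (hς : DifferentiableAt ℂ ς ((x:ℂ)+y*I)) :
    HasDerivAt (fun y' : ℝ => (((x:ℂ) - y'*I) * φ ((x:ℂ)+y'*I) + ς ((x:ℂ)+y'*I)).re)
      ((((x:ℂ)-y*I) * deriv φ ((x:ℂ)+y*I) * I - φ ((x:ℂ)+y*I) * I
        + deriv ς ((x:ℂ)+y*I) * I).re) y := by
  have hc : HasDerivAt (fun y' : ℝ => (x:ℂ) - y'*I) (-(1*I)) y := by
    exact ((Complex.ofRealCLM.hasDerivAt (x := y)).mul_const I).const_sub (x:ℂ)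
  have h := auxRe ((hc.mul (auxY φ x y hφ)).add (auxY ς x y hς))
  have e : (-(1*I) * φ ((x:ℂ)+y*I) + ((x:ℂ)-y*I) * (deriv φ ((x:ℂ)+y*I) * I)
      + deriv ς ((x:ℂ)+y*I) * I)
      = (((x:ℂ)-y*I) * deriv φ ((x:ℂ)+y*I) * I - φ ((x:ℂ)+y*I) * I
        + deriv ς ((x:ℂ)+y*I) * I) := by ring
  rwa [e] at h

lemma WxD (φ ς : ℂ → ℂ) (x y : ℝ)
    (hφ : DifferentiableAt ℂ φ ((x:ℂ)+y*I)) (hς : DifferentiableAt ℂ ς ((x:ℂ)+y*I)) :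
    HasDerivAt (fun x' : ℝ => (((x':ℂ) - y*I) * φ ((x':ℂ)+y*I) + ς ((x':ℂ)+y*I)).re)
      ((((x:ℂ)-y*I) * deriv φ ((x:ℂ)+y*I) + φ ((x:ℂ)+y*I)
        + deriv ς ((x:ℂ)+y*I)).re) x := by
  have hc : HasDerivAt (fun x' : ℝ => (x':ℂ) - y*I) 1 x := by
    simpa using (Complex.ofRealCLM.hasDerivAt (x := x)).sub_const ((y:ℂ)*I)
  have h := auxRe ((hc.mul (auxX φ x y hφ)).add (auxX ς x y hς))
  have e : (1 * φ ((x:ℂ)+y*I) + ((x:ℂ)-y*I) * deriv φ ((x:ℂ)+y*I)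
      + deriv ς ((x:ℂ)+y*I))
      = (((x:ℂ)-y*I) * deriv φ ((x:ℂ)+y*I) + φ ((x:ℂ)+y*I)
        + deriv ς ((x:ℂ)+y*I)) := by ring
  rwa [e] at h


/-- second Kolosov–Muskhelishvili formula: for φ, ς holomorphic on an
open set U ⊆ ℂ, ψ := ς′, and the Airy stress function
W(x,y) = Re((x − iy) φ(x+iy) + ς(x+iy)) with σ_xx = W_yy, σ_xy = −W_xy, σ_yy = W_xx,
one has σ_yy − σ_xx + 2i σ_xy = 2 (z̄ φ″(z) + ψ′(z)) for z = x + iy ∈ U. -/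
theorem stmt16 (U : Set ℂ) (hU : IsOpen U) (φ ς : ℂ → ℂ)
    (hφ : DifferentiableOn ℂ φ U) (hς : DifferentiableOn ℂ ς U) :
    let W : ℝ → ℝ → ℝ := fun x y =>
      (((x : ℂ) - (y : ℂ) * Complex.I) * φ ((x : ℂ) + (y : ℂ) * Complex.I) +
        ς ((x : ℂ) + (y : ℂ) * Complex.I)).re
    let ψ : ℂ → ℂ := deriv ς
    ∀ x y : ℝ, (x : ℂ) + (y : ℂ) * Complex.I ∈ U →
      let σxx : ℝ := deriv (deriv (fun y' : ℝ => W x y')) y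
      let σxy : ℝ := -deriv (fun x' : ℝ => deriv (fun y' : ℝ => W x' y') y) x
      let σyy : ℝ := deriv (deriv (fun x' : ℝ => W x' y)) x
      ((σyy : ℂ) - (σxx : ℂ) + 2 * Complex.I * (σxy : ℂ))
        = 2 * ((starRingEnd ℂ) ((x : ℂ) + (y : ℂ) * Complex.I) *
              deriv (deriv φ) ((x : ℂ) + (y : ℂ) * Complex.I) +
            deriv ψ ((x : ℂ) + (y : ℂ) * Complex.I)) := by
  intro W ψ x y hzU σxx σxy σyy
  have hφA : AnalyticOnNhd ℂ φ U := hφ.analyticOnNhd hU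
  have hςA : AnalyticOnNhd ℂ ς U := hς.analyticOnNhd hU
  have hdφA : AnalyticOnNhd ℂ (deriv φ) U := hφA.deriv
  have hdςA : AnalyticOnNhd ℂ (deriv ς) U := hςA.deriv
  set z : ℂ := (x:ℂ) + y*I with hz
  set c : ℂ := (x:ℂ) - y*I with hcdef
  set p1 : ℂ := deriv φ z
  set p2 : ℂ := deriv (deriv φ) z
  set s2 : ℂ := deriv (deriv ς) z
  set E : ℂ := c * p2 + s2 with hE
  -- differentiability at points
  have dφ : ∀ w ∈ U, DifferentiableAt ℂ φ w := fun w hw => (hφA w hw).differentiableAt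
  have dς : ∀ w ∈ U, DifferentiableAt ℂ ς w := fun w hw => (hςA w hw).differentiableAt
  have ddφ : ∀ w ∈ U, DifferentiableAt ℂ (deriv φ) w := fun w hw => (hdφA w hw).differentiableAt
  have ddς : ∀ w ∈ U, DifferentiableAt ℂ (deriv ς) w := fun w hw => (hdςA w hw).differentiableAt
  -- open preimages
  have hVy : IsOpen {y' : ℝ | (x:ℂ) + y'*I ∈ U} := by
    apply hU.preimage; fun_prop
  have hVx : IsOpen {x' : ℝ | (x':ℂ) + y*I ∈ U} := by
    apply hU.preimage; fun_prop
  have hcI : HasDerivAt (fun y' : ℝ => (x:ℂ) - y'*I) (-(1*I)) y :=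
    ((Complex.ofRealCLM.hasDerivAt (x := y)).mul_const I).const_sub (x:ℂ)
  have hcX : HasDerivAt (fun x' : ℝ => (x':ℂ) - y*I) 1 x := by
    simpa using (Complex.ofRealCLM.hasDerivAt (x := x)).sub_const ((y:ℂ)*I)
  -- σxx
  have hevY : deriv (fun y' : ℝ => (((x:ℂ) - y'*I) * φ ((x:ℂ)+y'*I) + ς ((x:ℂ)+y'*I)).re)
      =ᶠ[nhds y] (fun y' : ℝ => ((((x:ℂ)-y'*I) * deriv φ ((x:ℂ)+y'*I) * I
        - φ ((x:ℂ)+y'*I) * I + deriv ς ((x:ℂ)+y'*I) * I).re)) := by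
    filter_upwards [hVy.mem_nhds hzU] with y' hy'
    exact (WyD φ ς x y' (dφ _ hy') (dς _ hy')).deriv
  have hDyD : HasDerivAt (fun y' : ℝ => ((((x:ℂ)-y'*I) * deriv φ ((x:ℂ)+y'*I) * I
        - φ ((x:ℂ)+y'*I) * I + deriv ς ((x:ℂ)+y'*I) * I).re))
      (((-(1*I) * p1 + c * (p2 * I)) * I - (p1 * I) * I + (s2 * I) * I).re) y := by
    exact auxRe ((((hcI.mul (auxY (deriv φ) x y (ddφ _ hzU))).mul_const I).sub
      ((auxY φ x y (dφ _ hzU)).mul_const I)).add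
      ((auxY (deriv ς) x y (ddς _ hzU)).mul_const I))
  have hσxx : σxx = ((-(1*I) * p1 + c * (p2 * I)) * I - (p1 * I) * I + (s2 * I) * I).re := by
    show deriv (deriv (fun y' : ℝ => W x y')) y = _
    rw [show (fun y' : ℝ => W x y') = (fun y' : ℝ =>
      (((x:ℂ) - y'*I) * φ ((x:ℂ)+y'*I) + ς ((x:ℂ)+y'*I)).re) from rfl]
    rw [hevY.deriv_eq]
    exact hDyD.deriv
  -- σyy
  have hevX : deriv (fun x' : ℝ => (((x':ℂ) - y*I) * φ ((x':ℂ)+y*I) + ς ((x':ℂ)+y*I)).re)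
      =ᶠ[nhds x] (fun x' : ℝ => ((((x':ℂ)-y*I) * deriv φ ((x':ℂ)+y*I)
        + φ ((x':ℂ)+y*I) + deriv ς ((x':ℂ)+y*I)).re)) := by
    filter_upwards [hVx.mem_nhds hzU] with x' hx'
    exact (WxD φ ς x' y (dφ _ hx') (dς _ hx')).deriv
  have hDxD : HasDerivAt (fun x' : ℝ => ((((x':ℂ)-y*I) * deriv φ ((x':ℂ)+y*I)
        + φ ((x':ℂ)+y*I) + deriv ς ((x':ℂ)+y*I)).re))
      ((1 * p1 + c * p2 + p1 + s2).re) x := by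
    exact auxRe (((hcX.mul (auxX (deriv φ) x y (ddφ _ hzU))).add
      (auxX φ x y (dφ _ hzU))).add (auxX (deriv ς) x y (ddς _ hzU)))
  have hσyy : σyy = (1 * p1 + c * p2 + p1 + s2).re := by
    show deriv (deriv (fun x' : ℝ => W x' y)) x = _
    rw [show (fun x' : ℝ => W x' y) = (fun x' : ℝ =>
      (((x':ℂ) - y*I) * φ ((x':ℂ)+y*I) + ς ((x':ℂ)+y*I)).re) from rfl]
    rw [hevX.deriv_eq]
    exact hDxD.deriv
  -- σxy
  have hevXY : (fun x' : ℝ => deriv (fun y' : ℝ => (((x':ℂ) - y'*I) * φ ((x':ℂ)+y'*I)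
        + ς ((x':ℂ)+y'*I)).re) y)
      =ᶠ[nhds x] (fun x' : ℝ => ((((x':ℂ)-y*I) * deriv φ ((x':ℂ)+y*I) * I
        - φ ((x':ℂ)+y*I) * I + deriv ς ((x':ℂ)+y*I) * I).re)) := by
    filter_upwards [hVx.mem_nhds hzU] with x' hx'
    exact (WyD φ ς x' y (dφ _ hx') (dς _ hx')).deriv
  have hDxyD : HasDerivAt (fun x' : ℝ => ((((x':ℂ)-y*I) * deriv φ ((x':ℂ)+y*I) * I
        - φ ((x':ℂ)+y*I) * I + deriv ς ((x':ℂ)+y*I) * I).re))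
      (((1 * p1 + c * p2) * I - p1 * I + s2 * I).re) x := by
    exact auxRe ((((hcX.mul (auxX (deriv φ) x y (ddφ _ hzU))).mul_const I).sub
      ((auxX φ x y (dφ _ hzU)).mul_const I)).add
      ((auxX (deriv ς) x y (ddς _ hzU)).mul_const I))
  have hσxy : σxy = -(((1 * p1 + c * p2) * I - p1 * I + s2 * I).re) := by
    show -deriv (fun x' : ℝ => deriv (fun y' : ℝ => W x' y') y) x = _
    congr 1
    rw [show (fun x' : ℝ => deriv (fun y' : ℝ => W x' y') y)
      = (fun x' : ℝ => deriv (fun y' : ℝ => (((x':ℂ) - y'*I) * φ ((x':ℂ)+y'*I)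
        + ς ((x':ℂ)+y'*I)).re) y) from rfl]
    rw [hevXY.deriv_eq]
    exact hDxyD.deriv
  -- final algebra
  set Dx : ℂ := 1 * p1 + c * p2 + p1 + s2 with hDxdef
  set Dy : ℂ := (-(1*I) * p1 + c * (p2 * I)) * I - (p1 * I) * I + (s2 * I) * I with hDydef
  set Dxy : ℂ := (1 * p1 + c * p2) * I - p1 * I + s2 * I with hDxydef
  have hDsub : Dx - Dy = 2 * E := by
    rw [hDxdef, hDydef, hE]
    linear_combination (2*p1 - c*p2 - s2) * Complex.I_sq
  have hDxyE : Dxy = I * E := by rw [hDxydef, hE]; ring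
  have hre : (Dx.re : ℝ) - Dy.re = 2 * E.re := by
    have h := congrArg Complex.re hDsub
    simp only [Complex.sub_re, Complex.mul_re] at h
    simpa using h
  have him : -Dxy.re = E.im := by
    rw [hDxyE]
    simp [Complex.mul_re]
  have hconj : (starRingEnd ℂ) z = c := by
    rw [hz, hcdef]; simp; ring
  rw [hσxx, hσyy, hσxy]
  show ((Dx.re : ℂ)) - ((Dy.re : ℂ)) + 2 * I * ((-Dxy.re : ℝ) : ℂ)
      = 2 * ((starRingEnd ℂ) z * p2 + deriv ψ z)
  have hψ : deriv ψ z = s2 := rfl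
  rw [hψ, hconj, him]
  have h3 : ((Dx.re:ℂ)) - ((Dy.re:ℂ)) = 2*((E.re:ℂ)) := by
    have := congrArg (fun r : ℝ => (r:ℂ)) hre
    push_cast at this
    exact this
  rw [h3]
  conv_rhs => rw [show c * p2 + s2 = E from hE.symm, ← Complex.re_add_im E]
  ring
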